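/- Let C be the 3×3 matrix with rows (2, 0, −1), (0, 2, −1), (−1, −1, 3), so that W = (1/2)C⁻¹ = (1/16)·[[5,1,2],[1,5,2],[2,2,4]]. For every positive integer N, the minimum of (1/16)(5n₁² + 2n₁n₂ + 4n₁n₃ + 5n₂² + 4n₂n₃ + 4n₃²) over nonnegative integers n₁, n₂, n₃ with n₁ + n₂ + n₃ = N is attained at (n₁, n₂, n₃) = (N/3, N/3, N/3) if N ≡ 0 (mod 3), at ((N−1)/3, (N−1)/3, (N+2)/3) if N ≡ 1 (mod 3), and at ((N+1)/3, (N+1)/3, (N−2)/3) if N ≡ 2 (mod 3). In particular, for every nonnegative integer k, when passing from N = 3k+1 to N = 3k+2 the value of n₃ at the optimal point decreases from k+1 to k. -/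

import Mathlib

open Matrix BigOperators

/-- The quadratic form `(1/16)(5n₁² + 2n₁n₂ + 4n₁n₃ + 5n₂² + 4n₂n₃ + 4n₃²)`. -/
noncomputable def exampleEnergy (n : Fin 3 → ℤ) : ℝ :=
  (1 / 16 : ℝ) * (5 * (n 0 : ℝ) ^ 2 + 2 * (n 0 : ℝ) * (n 1 : ℝ) + 4 * (n 0 : ℝ) * (n 2 : ℝ)
    + 5 * (n 1 : ℝ) ^ 2 + 4 * (n 1 : ℝ) * (n 2 : ℝ) + 4 * (n 2 : ℝ) ^ 2)

/-- The optimal point for the example, depending on `N mod 3`. -/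
def exampleOpt (N : ℕ) : Fin 3 → ℤ :=
  if N % 3 = 0 then ![(N : ℤ) / 3, (N : ℤ) / 3, (N : ℤ) / 3]
  else if N % 3 = 1 then ![((N : ℤ) - 1) / 3, ((N : ℤ) - 1) / 3, ((N : ℤ) + 2) / 3]
  else ![((N : ℤ) + 1) / 3, ((N : ℤ) + 1) / 3, ((N : ℤ) - 2) / 3]

def Qint (n : Fin 3 → ℤ) : ℤ :=
  5 * n 0 ^ 2 + 2 * n 0 * n 1 + 4 * n 0 * n 2 + 5 * n 1 ^ 2 + 4 * n 1 * n 2 + 4 * n 2 ^ 2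

lemma energy_eq (n : Fin 3 → ℤ) : exampleEnergy n = ((Qint n : ℝ)) / 16 := by
  simp only [exampleEnergy, Qint]; push_cast; ring

lemma key1 (t d : ℤ) (h : (t - d) % 2 = 0) : 0 ≤ 3 * t ^ 2 + 2 * d ^ 2 - 4 * t := by
  rcases Int.even_or_odd d with ⟨v, hv⟩ | ⟨v, hv⟩
  · obtain ⟨u, hu⟩ : ∃ u, t = 2 * u := ⟨(t - d)/2 + v, by omega⟩
    subst hu
    rcases le_or_gt u 0 with h' | h' <;> nlinarith
  · have hd : (1:ℤ) ≤ d ^ 2 := by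
      rcases le_or_gt 0 v with h' | h' <;> nlinarith
    nlinarith [sq_nonneg (3 * t - 2)]

lemma key2 (t d : ℤ) (h : (t - d) % 2 = 0) : 0 ≤ 3 * t ^ 2 + 2 * d ^ 2 + 4 * t := by
  have := key1 (-t) d (by omega); nlinarith

lemma min0 (k : ℤ) (n : Fin 3 → ℤ) (h : n 0 + n 1 + n 2 = 3 * k) :
    24 * k ^ 2 ≤ Qint n := by
  have hc : n 2 = 3 * k - n 0 - n 1 := by omega
  simp only [Qint, hc]
  nlinarith [sq_nonneg (n 0 + n 1 - 2 * k), sq_nonneg (n 0 - n 1)]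

lemma min1 (k : ℤ) (n : Fin 3 → ℤ) (h : n 0 + n 1 + n 2 = 3 * k + 1) :
    24 * k ^ 2 + 16 * k + 4 ≤ Qint n := by
  have hc : n 2 = 3 * k + 1 - n 0 - n 1 := by omega
  have := key1 (n 0 + n 1 - 2 * k) (n 0 - n 1) (by omega)
  simp only [Qint, hc]; nlinarith

lemma min2 (k : ℤ) (n : Fin 3 → ℤ) (h : n 0 + n 1 + n 2 = 3 * k + 2) :
    24 * k ^ 2 + 32 * k + 12 ≤ Qint n := by
  have hc : n 2 = 3 * k + 2 - n 0 - n 1 := by omega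
  have := key2 (n 0 + n 1 - 2 * k - 2) (n 0 - n 1) (by omega)
  simp only [Qint, hc]; nlinarith

lemma energy_mono {m n : Fin 3 → ℤ} (h : Qint m ≤ Qint n) :
    exampleEnergy m ≤ exampleEnergy n := by
  rw [energy_eq, energy_eq]
  have : (Qint m : ℝ) ≤ (Qint n : ℝ) := by exact_mod_cast h
  linarith

/-- **Example 2.3.** For `C = [[2,0,−1],[0,2,−1],[−1,−1,3]]` one has
`W = (1/2)C⁻¹ = (1/16)[[5,1,2],[1,5,2],[2,2,4]]`, the quadratic form `nᵀWn` is
`exampleEnergy`, and for every positive integer `N` the constrained minimum over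
nonnegative integer vectors with coordinate sum `N` is attained at `exampleOpt N`.
In particular, passing from `N = 3k+1` to `N = 3k+2`, the third coordinate of the
optimal point decreases from `k+1` to `k`. -/
theorem addition_spectra_redistribution_example
    (C W : Matrix (Fin 3) (Fin 3) ℝ)
    (hC : C = !![2, 0, -1; 0, 2, -1; -1, -1, 3])
    (hW : W = (2 : ℝ)⁻¹ • C⁻¹) :
    W = (16 : ℝ)⁻¹ • !![5, 1, 2; 1, 5, 2; 2, 2, 4] ∧
    (∀ n : Fin 3 → ℤ,
      (fun i => (n i : ℝ)) ⬝ᵥ (W *ᵥ fun i => (n i : ℝ)) = exampleEnergy n) ∧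
    (∀ N : ℕ, 0 < N →
      (∀ i, 0 ≤ exampleOpt N i) ∧ (∑ i, exampleOpt N i) = (N : ℤ) ∧
      ∀ n : Fin 3 → ℤ, (∀ i, 0 ≤ n i) → (∑ i, n i) = (N : ℤ) →
        exampleEnergy (exampleOpt N) ≤ exampleEnergy n) ∧
    ∀ k : ℕ, exampleOpt (3 * k + 1) 2 = (k : ℤ) + 1 ∧ exampleOpt (3 * k + 2) 2 = (k : ℤ) := by
  have hCinv : C⁻¹ = (8 : ℝ)⁻¹ • !![5, 1, 2; 1, 5, 2; 2, 2, 4] := by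
    subst hC
    apply inv_eq_right_inv
    ext i j
    fin_cases i <;> fin_cases j <;>
      simp [Matrix.mul_apply, Fin.sum_univ_three, Matrix.one_apply] <;> norm_num
  have hW16 : W = (16 : ℝ)⁻¹ • !![5, 1, 2; 1, 5, 2; 2, 2, 4] := by
    rw [hW, hCinv, smul_smul]; norm_num
  refine ⟨hW16, ?_, ?_, ?_⟩
  · intro n
    rw [hW16, energy_eq]
    simp [Matrix.mulVec, dotProduct, Fin.sum_univ_three, Qint]
    push_cast
    ring
  · intro N hN
    have h3 : N % 3 = 0 ∨ N % 3 = 1 ∨ N % 3 = 2 := by omega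
    rcases h3 with h3 | h3 | h3
    · obtain ⟨k, hk⟩ : ∃ k : ℕ, N = 3 * k := ⟨N / 3, by omega⟩
      have hNk : (N : ℤ) = 3 * (k : ℤ) := by exact_mod_cast hk
      have hopt : exampleOpt N = ![(k:ℤ), k, k] := by
        simp only [exampleOpt, h3, if_true]
        have : (N : ℤ) / 3 = (k : ℤ) := by omega
        rw [this]
      refine ⟨?_, ?_, ?_⟩
      · intro i; fin_cases i <;> simp [hopt] <;> positivity
      · simp [hopt, Fin.sum_univ_three]; omega
      · intro n _ hs
        apply energy_mono
        have hq : Qint (exampleOpt N) = 24 * (k:ℤ)^2 := by simp [hopt, Qint]; ring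
        rw [hq]
        exact min0 k n (by simpa [Fin.sum_univ_three, hNk] using hs)
    · obtain ⟨k, hk⟩ : ∃ k : ℕ, N = 3 * k + 1 := ⟨N / 3, by omega⟩
      have hNk : (N : ℤ) = 3 * (k : ℤ) + 1 := by exact_mod_cast hk
      have hopt : exampleOpt N = ![(k:ℤ), k, k + 1] := by
        simp only [exampleOpt, h3]
        norm_num
        have h1 : ((N : ℤ) - 1) / 3 = (k : ℤ) := by omega
        have h2 : ((N : ℤ) + 2) / 3 = (k : ℤ) + 1 := by omega
        rw [h1, h2]
        exact ⟨rfl, rfl⟩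
      refine ⟨?_, ?_, ?_⟩
      · intro i; fin_cases i <;> simp [hopt] <;> positivity
      · simp [hopt, Fin.sum_univ_three]; omega
      · intro n _ hs
        apply energy_mono
        have hq : Qint (exampleOpt N) = 24 * (k:ℤ)^2 + 16 * k + 4 := by
          simp [hopt, Qint]; ring
        rw [hq]
        exact min1 k n (by simpa [Fin.sum_univ_three, hNk] using hs)
    · obtain ⟨k, hk⟩ : ∃ k : ℕ, N = 3 * k + 2 := ⟨N / 3, by omega⟩
      have hNk : (N : ℤ) = 3 * (k : ℤ) + 2 := by exact_mod_cast hk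
      have hopt : exampleOpt N = ![(k:ℤ) + 1, k + 1, k] := by
        simp only [exampleOpt, h3]
        norm_num
        have h1 : ((N : ℤ) + 1) / 3 = (k : ℤ) + 1 := by omega
        have h2 : ((N : ℤ) - 2) / 3 = (k : ℤ) := by omega
        rw [h1, h2]
        exact ⟨rfl, rfl⟩
      refine ⟨?_, ?_, ?_⟩
      · intro i; fin_cases i <;> simp [hopt] <;> positivity
      · simp [hopt, Fin.sum_univ_three]; omega
      · intro n _ hs
        apply energy_mono
        have hq : Qint (exampleOpt N) = 24 * (k:ℤ)^2 + 32 * k + 12 := by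
          simp [hopt, Qint]; ring
        rw [hq]
        exact min2 k n (by simpa [Fin.sum_univ_three, hNk] using hs)
  · intro k
    constructor
    · have h1 : (3 * k + 1) % 3 = 1 := by omega
      have he : exampleOpt (3 * k + 1) 2 = (((3 * k + 1 : ℕ) : ℤ) + 2) / 3 := by
        simp [exampleOpt, h1]
      rw [he]; push_cast; omega
    · have h2 : (3 * k + 2) % 3 = 2 := by omega
      have he : exampleOpt (3 * k + 2) 2 = (((3 * k + 2 : ℕ) : ℤ) - 2) / 3 := by
        simp [exampleOpt, h2]
      rw [he]; push_cast; omega
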